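/- For every ε > 0, β ∈ (0,1), integers u ≥ 2, T ≥ 1, and α' > 0: if there exists an ε-differentially private continual-observation range-counting mechanism over [u] with error α' and failure probability β (privacy with respect to fully dynamic set streams differing in one operation), then there exists an ε-differentially private continual-observation predecessor mechanism over [u] with error bounds α_t = 2α' + 1 for all t ≤ T and failure probability β. -/

import Mathlib

open MeasureTheory
/-- Base-2 logarithm where the argument is clamped below by 2. -/
noncomputable def log2c (z : ℝ) : ℝ := Real.logb 2 (max z 2)

/-- An operation of a fully dynamic set stream over the universe `Fin u`:
insert an element, delete an element, or leave the set unchanged. -/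
inductive SetOp (u : ℕ) where
  | ins : Fin u → SetOp u
  | del : Fin u → SetOp u
  | nop : SetOp u
deriving DecidableEq

instance {u : ℕ} : MeasurableSpace (SetOp u) := ⊤
instance {u : ℕ} : MeasurableSpace (Option (Fin u)) := ⊤

/-- Apply a set operation to the maintained set. -/
def SetOp.apply {u : ℕ} (D : Finset (Fin u)) : SetOp u → Finset (Fin u)
  | .ins z => insert z D
  | .del z => D.erase z
  | .nop => D

/-- The maintained set after the first `n` operations of an infinite stream. -/
def DsetN {u : ℕ} (x : ℕ → SetOp u) : ℕ → Finset (Fin u)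
  | 0 => ∅
  | n + 1 => SetOp.apply (DsetN x n) (x n)

/-- The maintained set `D_t` after the first `t+1` operations of a finite
stream (time steps 0-indexed). -/
def Dset {u T : ℕ} (x : Fin T → SetOp u) (t : Fin T) : Finset (Fin u) :=
  DsetN (fun n => if h : n < T then x ⟨n, h⟩ else SetOp.nop) (t.1 + 1)

/-- Two streams differ in exactly one operation. -/
def OneOpNeighboring {X : Type*} {T : ℕ} (x y : Fin T → X) : Prop :=
  ∃ t₀ : Fin T, x t₀ ≠ y t₀ ∧ ∀ s : Fin T, s ≠ t₀ → x s = y s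

/-- A continual-observation mechanism: a measurable assignment of output
distributions to input streams whose outputs up to time `t` depend only on the
first `t` inputs. -/
def IsCOMech {X O : Type*} [MeasurableSpace X] [MeasurableSpace O] {T : ℕ}
    (M : (Fin T → X) → Measure (Fin T → O)) : Prop :=
  Measurable M ∧ (∀ x, IsProbabilityMeasure (M x)) ∧
    ∀ (t : Fin T) (x y : Fin T → X), (∀ s, s ≤ t → x s = y s) →
      (M x).map (fun a (s : {s : Fin T // s ≤ t}) => a s.1) =
      (M y).map (fun a (s : {s : Fin T // s ≤ t}) => a s.1)

/-- `ε`-differential privacy with respect to streams differing in exactly one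
operation. -/
def IsOneOpDP {X O : Type*} [MeasurableSpace X] [MeasurableSpace O] {T : ℕ} (ε : ℝ)
    (M : (Fin T → X) → Measure (Fin T → O)) : Prop :=
  ∀ x y, OneOpNeighboring x y → ∀ S : Set (Fin T → O), MeasurableSet S →
    M x S ≤ ENNReal.ofReal (Real.exp ε) * M y S

/-- Correctness of a predecessor answer `r : Fin u → Option (Fin u)` at one
time step, for maintained set `D` and error bound `α`. -/
def PredAnswerGood {u : ℕ} (D : Finset (Fin u)) (r : Fin u → Option (Fin u))
    (α : ℝ) : Prop :=
  ∀ q : Fin u,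
    match r q with
    | some p => 1 ≤ ((D.filter fun z => p ≤ z ∧ z ≤ q).card : ℝ) ∧
        ((D.filter fun z => p ≤ z ∧ z ≤ q).card : ℝ) ≤ α
    | none => ((D.filter fun z => z ≤ q).card : ℝ) ≤ α

/-- Correctness of range-count answers `c : Fin u → Fin u → ℝ` at one time
step, for maintained set `D` and error bound `α` (only pairs `p ≤ q` count). -/
def RangeAnswerGood {u : ℕ} (D : Finset (Fin u)) (c : Fin u → Fin u → ℝ)
    (α : ℝ) : Prop :=
  ∀ p q : Fin u, p ≤ q →
    |c p q - ((D.filter fun z => p ≤ z ∧ z ≤ q).card : ℝ)| ≤ α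

/-- Choose the largest `x ≤ q` flagged by `b`, if any. -/
noncomputable def choosePred {u : ℕ} (q : Fin u) (b : Fin u → Bool) : Option (Fin u) :=
  if h : (Finset.univ.filter (fun x : Fin u => x ≤ q ∧ b x)).Nonempty
  then some ((Finset.univ.filter (fun x : Fin u => x ≤ q ∧ b x)).max' h) else none

lemma choosePred_good {u : ℕ} (hu : 2 ≤ u) {α' : ℝ} (hα' : 0 < α')
    (D : Finset (Fin u)) (c : Fin u → Fin u → ℝ) (h : RangeAnswerGood D c α') :
    PredAnswerGood D (fun q => choosePred q (fun x => decide (α' < c x q))) (2 * α' + 1) := by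
  intro q
  beta_reduce
  set s := Finset.univ.filter (fun x : Fin u => x ≤ q ∧ decide (α' < c x q)) with hs
  by_cases hne : s.Nonempty
  · have : choosePred q (fun x => decide (α' < c x q)) = some (s.max' hne) := by
      rw [choosePred]; rw [dif_pos hne]
    rw [this]
    set p := s.max' hne with hp
    have hpmem : p ∈ s := s.max'_mem hne
    simp only [hs, Finset.mem_filter, decide_eq_true_eq] at hpmem
    obtain ⟨-, hpq, hcp⟩ := hpmem
    have herr := h p q hpq
    have hlow : (1 : ℝ) ≤ ((D.filter fun z => p ≤ z ∧ z ≤ q).card : ℝ) := by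
      have : (0 : ℝ) < ((D.filter fun z => p ≤ z ∧ z ≤ q).card : ℝ) := by
        have := abs_le.mp herr; nlinarith
      exact_mod_cast Nat.one_le_iff_ne_zero.mpr (by exact_mod_cast this.ne')
    refine ⟨hlow, ?_⟩
    rcases eq_or_lt_of_le hpq with heq | hlt
    · -- p = q : count ≤ 1
      have hsub : (D.filter fun z => p ≤ z ∧ z ≤ q) ⊆ {p} := by
        intro z hz
        simp only [Finset.mem_filter] at hz
        have : z ≤ p := heq ▸ hz.2.2
        simp [le_antisymm this hz.2.1]
      have hcard : (D.filter fun z => p ≤ z ∧ z ≤ q).card ≤ 1 := by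
        simpa using Finset.card_le_card hsub
      have : ((D.filter fun z => p ≤ z ∧ z ≤ q).card : ℝ) ≤ 1 := by exact_mod_cast hcard
      linarith
    · -- p < q, look at p+1
      have hp1 : p.1 + 1 < u := lt_of_le_of_lt (Nat.succ_le_of_lt hlt) q.isLt
      set p' : Fin u := ⟨p.1 + 1, hp1⟩ with hp'
      have hp'q : p' ≤ q := Nat.succ_le_of_lt hlt
      have hp'notmem : p' ∉ s := by
        intro hmem
        have := s.le_max' p' hmem
        rw [← hp] at this
        have : p.1 + 1 ≤ p.1 := this
        omega
      have hcp' : ¬ (α' < c p' q) := by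
        intro hc
        exact hp'notmem (by simp [hs, hp'q, hc])
      push_neg at hcp'
      have herr' := h p' q hp'q
      have hup' : ((D.filter fun z => p' ≤ z ∧ z ≤ q).card : ℝ) ≤ 2 * α' := by
        have := abs_le.mp herr'; linarith
      have hsub : (D.filter fun z => p ≤ z ∧ z ≤ q) ⊆
          insert p (D.filter fun z => p' ≤ z ∧ z ≤ q) := by
        intro z hz
        simp only [Finset.mem_filter] at hz
        by_cases heq : z = p
        · simp [heq]
        · have : p < z := lt_of_le_of_ne hz.2.1 (Ne.symm heq)
          have : p' ≤ z := Nat.succ_le_of_lt this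
          simp only [Finset.mem_insert, Finset.mem_filter]
          exact Or.inr ⟨hz.1, this, hz.2.2⟩
      have hcard : (D.filter fun z => p ≤ z ∧ z ≤ q).card ≤
          (D.filter fun z => p' ≤ z ∧ z ≤ q).card + 1 := by
        calc (D.filter fun z => p ≤ z ∧ z ≤ q).card
            ≤ (insert p (D.filter fun z => p' ≤ z ∧ z ≤ q)).card := Finset.card_le_card hsub
          _ ≤ (D.filter fun z => p' ≤ z ∧ z ≤ q).card + 1 := Finset.card_insert_le _ _
      have : ((D.filter fun z => p ≤ z ∧ z ≤ q).card : ℝ) ≤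
          ((D.filter fun z => p' ≤ z ∧ z ≤ q).card : ℝ) + 1 := by exact_mod_cast hcard
      linarith
  · have : choosePred q (fun x => decide (α' < c x q)) = none := by
      rw [choosePred]; rw [dif_neg hne]
    rw [this]
    have h0 : (0 : ℕ) < u := by omega
    set z0 : Fin u := ⟨0, h0⟩ with hz0
    have hz0q : z0 ≤ q := Nat.zero_le _
    have hcz0 : ¬ (α' < c z0 q) := by
      intro hc
      exact hne ⟨z0, by simp [hs, hz0q, hc]⟩
    push_neg at hcz0
    have herr := h z0 q hz0q
    have hfeq : (D.filter fun z => z ≤ q) = (D.filter fun z => z0 ≤ z ∧ z ≤ q) := by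
      apply Finset.filter_congr
      intro z _
      simp [hz0, show z0 ≤ z from Nat.zero_le _, show (⟨0, h0⟩ : Fin u) ≤ z from Nat.zero_le _]
    rw [hfeq]
    have := abs_le.mp herr
    linarith

lemma measurable_choosePredComp {u : ℕ} (α' : ℝ) :
    Measurable (fun (c : Fin u → Fin u → ℝ) (q : Fin u) =>
      choosePred q (fun x => decide (α' < c x q))) := by
  apply measurable_pi_lambda
  intro q
  have h1 : Measurable (fun (c : Fin u → Fin u → ℝ) (x : Fin u) => decide (α' < c x q)) := by
    apply measurable_pi_lambda
    intro x
    have : Measurable (fun (c : Fin u → Fin u → ℝ) => c x q) :=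
      (measurable_pi_apply q).comp (measurable_pi_apply x)
    have hb : Measurable (fun r : ℝ => decide (α' < r)) := by
      have : (fun r : ℝ => decide (α' < r)) = fun r => if α' < r then true else false := by
        funext r; by_cases h : α' < r <;> simp [h]
      rw [this]
      exact Measurable.ite (measurableSet_lt measurable_const measurable_id)
        measurable_const measurable_const
    exact hb.comp this
  exact (measurable_of_countable (choosePred q)).comp h1

theorem range_count_implies_predecessor
    (ε β : ℝ) (u T : ℕ) (α' : ℝ)
    (hε : 0 < ε) (hβ : β ∈ Set.Ioo (0 : ℝ) 1) (hu : 2 ≤ u) (hT : 1 ≤ T)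
    (hα' : 0 < α')
    (hrc : ∃ M : (Fin T → SetOp u) → Measure (Fin T → Fin u → Fin u → ℝ),
      IsCOMech M ∧ IsOneOpDP ε M ∧
      ∀ x, ENNReal.ofReal (1 - β) ≤
        M x {a | ∀ t : Fin T, RangeAnswerGood (Dset x t) (a t) α'}) :
    ∃ M : (Fin T → SetOp u) → Measure (Fin T → Fin u → Option (Fin u)),
      IsCOMech M ∧ IsOneOpDP ε M ∧
      ∀ x, ENNReal.ofReal (1 - β) ≤
        M x {a | ∀ t : Fin T, PredAnswerGood (Dset x t) (a t) (2 * α' + 1)} := by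
  obtain ⟨M, ⟨hMmeas, hMprob, hMco⟩, hMdp, hMacc⟩ := hrc
  set F : (Fin T → Fin u → Fin u → ℝ) → (Fin T → Fin u → Option (Fin u)) :=
    fun a t q => choosePred q (fun x => decide (α' < a t x q)) with hF
  have hFmeas : Measurable F := by
    apply measurable_pi_lambda
    intro t
    exact (measurable_choosePredComp α').comp (measurable_pi_apply t)
  refine ⟨fun x => (M x).map F, ⟨?_, ?_, ?_⟩, ?_, ?_⟩
  · exact (Measure.measurable_map F hFmeas).comp hMmeas
  · intro x
    have := hMprob x
    exact Measure.isProbabilityMeasure_map hFmeas.aemeasurable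
  · intro t x y hxy
    have hproj : Measurable (fun (a : Fin T → Fin u → Option (Fin u))
        (s : {s : Fin T // s ≤ t}) => a s.1) := by
      apply measurable_pi_lambda; intro s; exact measurable_pi_apply s.1
    have hprojR : Measurable (fun (a : Fin T → Fin u → Fin u → ℝ)
        (s : {s : Fin T // s ≤ t}) => a s.1) := by
      apply measurable_pi_lambda; intro s; exact measurable_pi_apply s.1
    set G : ({s : Fin T // s ≤ t} → Fin u → Fin u → ℝ) →
        ({s : Fin T // s ≤ t} → Fin u → Option (Fin u)) :=
      fun g s q => choosePred q (fun x => decide (α' < g s x q)) with hG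
    have hGmeas : Measurable G := by
      apply measurable_pi_lambda
      intro s
      exact (measurable_choosePredComp α').comp (measurable_pi_apply s)
    have hcomm : ∀ z : (Fin T → SetOp u),
        ((M z).map F).map (fun a (s : {s : Fin T // s ≤ t}) => a s.1) =
        ((M z).map (fun a (s : {s : Fin T // s ≤ t}) => a s.1)).map G := by
      intro z
      rw [Measure.map_map hproj hFmeas, Measure.map_map hGmeas hprojR]
      rfl
    rw [hcomm x, hcomm y, hMco t x y hxy]
  · intro x y hxy S hS
    rw [Measure.map_apply hFmeas hS, Measure.map_apply hFmeas hS]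
    exact hMdp x y hxy _ (hFmeas hS)
  · intro x
    set E : Set (Fin T → Fin u → Option (Fin u)) :=
      {a | ∀ t : Fin T, PredAnswerGood (Dset x t) (a t) (2 * α' + 1)} with hE
    have hEmeas : MeasurableSet E := (Set.to_countable E).measurableSet
    rw [Measure.map_apply hFmeas hEmeas]
    refine le_trans (hMacc x) (measure_mono ?_)
    intro a ha t
    exact choosePred_good hu hα' (Dset x t) (a t) (ha t)
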